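/- Let D be a random variable on a finite space, W = φ(D) a function of D taking values in a finite set 𝒲, U a random variable independent of D, and S = A(W, U) for an arbitrary function A. If for each s the measurable set E_s satisfies P(D ∈ E_s) ≤ α, then P(D ∈ E_S) ≤ α + sqrt(H(W)/2) ≤ α + sqrt(log|𝒲|/2). -/

import Mathlib

open scoped BigOperators

/-- A probability vector on a finite space. -/
def IsProbVec {α : Type*} [Fintype α] (p : α → ℝ) : Prop :=
  (∀ x, 0 ≤ p x) ∧ ∑ x, p x = 1

/-- Shannon entropy in nats (`0 log 0 = 0` holds since `Real.log 0 = 0`). -/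
noncomputable def entropy {α : Type*} [Fintype α] (p : α → ℝ) : ℝ :=
  -∑ x, p x * Real.log (p x)

/-- Finite-message screening bound. `D` has law `pD` on a finite space,
`W = φ(D)` takes values in a finite set `𝒲`, `U` has law `pU` and is independent
of `D` (so the joint law of `(D,U)` is the product `pD ⊗ pU`), and
`S = A(W,U)`. If `P(D ∈ E_s) ≤ α` for every fixed `s`, then
`P(D ∈ E_S) ≤ α + sqrt(H(W)/2) ≤ α + sqrt(log|𝒲|/2)`. -/

lemma key_poly (y : ℝ) (h0 : 0 ≤ y) (h1 : y ≤ 1) :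
    2*(1 - y^4)^2 ≤ 4*(1 - y) := by
  nlinarith [sq_nonneg (1-y), sq_nonneg (y*(1-y)), sq_nonneg (y^2*(1-y)), sq_nonneg (y^3*(1-y)), mul_nonneg h0 (sq_nonneg (1-y)), mul_nonneg (mul_nonneg h0 h0) (sq_nonneg (1-y)), sq_nonneg (1+y-2*y^2), sq_nonneg (1-2*y^2), mul_nonneg h0 (sq_nonneg (1+y-2*y^2)), sq_nonneg (y^2-y^3), mul_nonneg (sub_nonneg.2 h1) h0]

lemma neg_log_ge (x : ℝ) (h0 : 0 < x) (h1 : x ≤ 1) : 2*(1-x)^2 ≤ -Real.log x := by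
  set y := Real.sqrt (Real.sqrt x) with hy
  have hx0 : (0:ℝ) ≤ x := h0.le
  have hy0 : 0 ≤ y := Real.sqrt_nonneg _
  have hy4 : y^4 = x := by
    have h : y^4 = (y^2)^2 := by ring
    rw [h, Real.sq_sqrt (Real.sqrt_nonneg x), Real.sq_sqrt hx0]
  have hy1 : y ≤ 1 := by
    rw [hy]
    exact Real.sqrt_le_one.mpr (Real.sqrt_le_one.mpr h1)
  have hyp : 0 < y := by
    rcases hy0.lt_or_eq with h | h
    · exact h
    · exfalso; rw [← h] at hy4; simp at hy4; nlinarith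
  have hylog : Real.log x = 4 * Real.log y := by
    rw [← hy4, Real.log_pow]; push_cast; ring
  have hle : Real.log y ≤ y - 1 := Real.log_le_sub_one_of_pos hyp
  have hk := key_poly y hy0 hy1
  have h2 : 2*(1-x)^2 ≤ 4*(1-y) := by rw [← hy4]; exact hk
  rw [hylog]; linarith

theorem finite_message_screening {𝒟 𝒲 𝒰 𝒮 : Type*}
    [Fintype 𝒟] [DecidableEq 𝒟] [Fintype 𝒲] [Fintype 𝒰] [DecidableEq 𝒲]
    (pD : 𝒟 → ℝ) (hD : IsProbVec pD) (pU : 𝒰 → ℝ) (hU : IsProbVec pU)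
    (φ : 𝒟 → 𝒲) (A : 𝒲 → 𝒰 → 𝒮) (E : 𝒮 → Finset 𝒟) (α : ℝ)
    (hcov : ∀ s : 𝒮, ∑ d ∈ E s, pD d ≤ α) :
    (∑ d, ∑ u, pD d * pU u * (if d ∈ E (A (φ d) u) then (1:ℝ) else 0)) ≤
        α + Real.sqrt (entropy (fun w => ∑ d, if φ d = w then pD d else 0) / 2) ∧
      α + Real.sqrt (entropy (fun w => ∑ d, if φ d = w then pD d else 0) / 2) ≤
        α + Real.sqrt (Real.log (Fintype.card 𝒲) / 2) := by
  set pW : 𝒲 → ℝ := fun w => ∑ d, if φ d = w then pD d else 0 with hpW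
  have hpW0 : ∀ w, 0 ≤ pW w := fun w =>
    Finset.sum_nonneg fun d _ => by split <;> simp [hD.1 d]
  have hpWsum : ∑ w, pW w = 1 := by
    rw [hpW]
    rw [Finset.sum_comm]
    simp [Finset.sum_ite_eq, hD.2]
  have hpW1 : ∀ w, pW w ≤ 1 := by
    intro w
    rw [← hpWsum]
    exact Finset.single_le_sum (fun w' _ => hpW0 w') (Finset.mem_univ w)
  have hfiber : ∀ g : 𝒲 → ℝ, ∑ d, pD d * g (φ d) = ∑ w, pW w * g w := by
    intro g
    simp only [hpW, Finset.sum_mul]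
    rw [Finset.sum_comm]
    apply Finset.sum_congr rfl
    intro d _
    simp [ite_mul, Finset.sum_ite_eq]
  set H : ℝ := entropy pW with hH
  set T : ℝ := ∑ w, pW w * (1 - pW w) with hTdef
  have hT0 : 0 ≤ T :=
    Finset.sum_nonneg fun w _ => mul_nonneg (hpW0 w) (by linarith [hpW1 w])
  -- Step 1: LHS ≤ α + T
  have hSu : ∀ u : 𝒰,
      (∑ d, pD d * (if d ∈ E (A (φ d) u) then (1:ℝ) else 0)) ≤ α + T := by
    intro u
    have h1 : (∑ d, pD d * (if d ∈ E (A (φ d) u) then (1:ℝ) else 0)) ≤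
        (∑ d, pD d * pW (φ d) * (if d ∈ E (A (φ d) u) then (1:ℝ) else 0))
          + ∑ d, pD d * (1 - pW (φ d)) := by
      rw [← Finset.sum_add_distrib]
      apply Finset.sum_le_sum
      intro d _
      have := hD.1 d; have := hpW0 (φ d); have := hpW1 (φ d)
      split <;> nlinarith
    have h2 : (∑ d, pD d * pW (φ d) * (if d ∈ E (A (φ d) u) then (1:ℝ) else 0)) ≤ α := by
      have h3 : ∀ d : 𝒟, pD d * pW (φ d) * (if d ∈ E (A (φ d) u) then (1:ℝ) else 0) ≤
          ∑ w, pW w * (pD d * (if d ∈ E (A w u) then (1:ℝ) else 0)) := by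
        intro d
        have := Finset.single_le_sum
          (f := fun w => pW w * (pD d * (if d ∈ E (A w u) then (1:ℝ) else 0)))
          (fun w _ => mul_nonneg (hpW0 w) (mul_nonneg (hD.1 d) (by split <;> norm_num)))
          (Finset.mem_univ (φ d))
        calc pD d * pW (φ d) * (if d ∈ E (A (φ d) u) then (1:ℝ) else 0)
            = pW (φ d) * (pD d * (if d ∈ E (A (φ d) u) then (1:ℝ) else 0)) := by ring
          _ ≤ _ := this
      calc (∑ d, pD d * pW (φ d) * (if d ∈ E (A (φ d) u) then (1:ℝ) else 0))
          ≤ ∑ d, ∑ w, pW w * (pD d * (if d ∈ E (A w u) then (1:ℝ) else 0)) :=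
            Finset.sum_le_sum fun d _ => h3 d
        _ = ∑ w, pW w * ∑ d, pD d * (if d ∈ E (A w u) then (1:ℝ) else 0) := by
            rw [Finset.sum_comm]
            exact Finset.sum_congr rfl fun w _ => by rw [Finset.mul_sum]
        _ ≤ ∑ w, pW w * α := by
            apply Finset.sum_le_sum
            intro w _
            apply mul_le_mul_of_nonneg_left _ (hpW0 w)
            have : (∑ d, pD d * (if d ∈ E (A w u) then (1:ℝ) else 0)) = ∑ d ∈ E (A w u), pD d := by
              simp [mul_ite, mul_one, mul_zero]
            rw [this]; exact hcov (A w u)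
        _ = α := by rw [← Finset.sum_mul, hpWsum, one_mul]
    have h4 : (∑ d, pD d * (1 - pW (φ d))) = T := hfiber (fun w => 1 - pW w)
    linarith
  have step1 : (∑ d, ∑ u, pD d * pU u * (if d ∈ E (A (φ d) u) then (1:ℝ) else 0)) ≤ α + T := by
    calc (∑ d, ∑ u, pD d * pU u * (if d ∈ E (A (φ d) u) then (1:ℝ) else 0))
        = ∑ u, pU u * ∑ d, pD d * (if d ∈ E (A (φ d) u) then (1:ℝ) else 0) := by
          rw [Finset.sum_comm]
          exact Finset.sum_congr rfl fun u _ => by rw [Finset.mul_sum]; exact Finset.sum_congr rfl fun d _ => by ring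
      _ ≤ ∑ u, pU u * (α + T) :=
          Finset.sum_le_sum fun u _ => mul_le_mul_of_nonneg_left (hSu u) (hU.1 u)
      _ = α + T := by rw [← Finset.sum_mul, hU.2, one_mul]
  -- Step 2: T ≤ sqrt (H/2)
  have hCS : T^2 ≤ ∑ w, pW w * (1 - pW w)^2 := by
    have := Finset.sum_mul_sq_le_sq_mul_sq Finset.univ
      (fun w => Real.sqrt (pW w)) (fun w => Real.sqrt (pW w) * (1 - pW w))
    have e1 : ∀ w : 𝒲, Real.sqrt (pW w) * (Real.sqrt (pW w) * (1 - pW w)) = pW w * (1 - pW w) := by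
      intro w
      rw [← mul_assoc, Real.mul_self_sqrt (hpW0 w)]
    have e2 : ∀ w : 𝒲, Real.sqrt (pW w) ^ 2 = pW w := fun w => Real.sq_sqrt (hpW0 w)
    have e3 : ∀ w : 𝒲, (Real.sqrt (pW w) * (1 - pW w))^2 = pW w * (1 - pW w)^2 := by
      intro w
      rw [mul_pow, e2]
    simp only [e1, e2, e3] at this
    calc T^2 = (∑ w, pW w * (1 - pW w))^2 := by rw [hTdef]
      _ ≤ (∑ w, pW w) * ∑ w, pW w * (1 - pW w)^2 := this
      _ = ∑ w, pW w * (1 - pW w)^2 := by rw [hpWsum, one_mul]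
  have hent : 2 * (∑ w, pW w * (1 - pW w)^2) ≤ H := by
    rw [hH, entropy, ← Finset.sum_neg_distrib, Finset.mul_sum]
    apply Finset.sum_le_sum
    intro w _
    rcases (hpW0 w).lt_or_eq with h | h
    · have := neg_log_ge (pW w) h (hpW1 w)
      have hp := h.le
      nlinarith
    · rw [← h]; norm_num
  have step2 : T ≤ Real.sqrt (H / 2) := by
    have : T^2 ≤ H / 2 := by linarith
    calc T = Real.sqrt (T^2) := (Real.sqrt_sq hT0).symm
      _ ≤ Real.sqrt (H / 2) := Real.sqrt_le_sqrt this
  -- Step 3: H ≤ log card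
  have hDne : Nonempty 𝒟 := by
    by_contra h
    rw [not_nonempty_iff] at h
    have := hD.2
    rw [Finset.univ_eq_empty, Finset.sum_empty] at this
    norm_num at this
  have hWne : Nonempty 𝒲 := ⟨φ (Classical.arbitrary 𝒟)⟩
  have hn1 : (1:ℝ) ≤ (Fintype.card 𝒲 : ℝ) := by
    have := Fintype.card_pos_iff.mpr hWne
    exact_mod_cast this
  set n : ℝ := (Fintype.card 𝒲 : ℝ) with hn
  have hn0 : 0 < n := by linarith
  have step3 : H ≤ Real.log n := by
    have key : ∀ w : 𝒲, -(pW w * Real.log (pW w)) - pW w * Real.log n ≤ 1/n - pW w := by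
      intro w
      rcases (hpW0 w).lt_or_eq with h | h
      · have hnp : 0 < n * pW w := mul_pos hn0 h
        have hinv : 0 < (n * pW w)⁻¹ := by positivity
        have := Real.log_le_sub_one_of_pos hinv
        rw [Real.log_inv, Real.log_mul (ne_of_gt hn0) (ne_of_gt h)] at this
        have h2 : pW w * (-(Real.log n + Real.log (pW w))) ≤ pW w * ((n * pW w)⁻¹ - 1) :=
          mul_le_mul_of_nonneg_left this h.le
        have h3 : pW w * (n * pW w)⁻¹ = 1/n := by
          field_simp
        nlinarith [h2, h3]
      · rw [← h]
        simp
        positivity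
    have hsum := Finset.sum_le_sum fun w (_ : w ∈ Finset.univ) => key w
    rw [Finset.sum_sub_distrib] at hsum
    have e1 : ∑ x : 𝒲, pW x * Real.log n = Real.log n := by
      rw [← Finset.sum_mul, hpWsum, one_mul]
    have e2 : ∑ _x : 𝒲, (1/n : ℝ) = 1 := by
      rw [Finset.sum_const, Finset.card_univ, nsmul_eq_mul, ← hn]
      field_simp
    have e3 : H = ∑ x : 𝒲, -(pW x * Real.log (pW x)) := by
      rw [hH, entropy]
      rw [Finset.sum_neg_distrib]
    rw [Finset.sum_sub_distrib, e1, e2, hpWsum] at hsum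
    linarith
  refine ⟨step1.trans (by linarith [step2]), ?_⟩
  have : Real.sqrt (H / 2) ≤ Real.sqrt (Real.log n / 2) :=
    Real.sqrt_le_sqrt (by linarith)
  linarith
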